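/- Fix a positive integer d, and for each n ≥ d let G be a random graph on n labelled vertices in which each of the n(n−1)/2 possible edges is included independently with probability d/n (the Erdős–Rényi model G(n, d/n)). Let (ε_n) and (δ_n) be sequences of positive reals with ε_n·δ_n·log n → ∞ as n → ∞. Then the probability that G is ((4d)^{−(1+δ_n)(1+ε_n)/ε_n}·n, ε_n)-sparse tends to 1 as n → ∞. -/

import Mathlib

set_option maxHeartbeats 1000000

open scoped Classical

/-- The set of edges of `G` with both endpoints in `U`. -/
def EdgesWithin {V : Type*} (G : SimpleGraph V) (U : Set V) : Set (Sym2 V) :=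
  {e ∈ G.edgeSet | ∀ v ∈ e, v ∈ U}

/-- A graph is `(ℓ, ε)`-sparse (with a real size threshold `ℓ`) if every vertex set
`U` of size at most `ℓ` spans at most `(1+ε)|U|` edges. -/
def SparseR {V : Type*} (G : SimpleGraph V) (ℓ : ℝ) (ε : ℝ) : Prop :=
  ∀ U : Set V, (U.ncard : ℝ) ≤ ℓ → ((EdgesWithin G U).ncard : ℝ) ≤ (1 + ε) * U.ncard

/-- The probability, in the Erdős–Rényi model `G(n, p)` where each of the `n(n-1)/2`
possible edges is included independently with probability `p`, that the sampled graph
satisfies the property `A`: the sum over all edge sets `E` of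
`p^{|E|}(1-p)^{n(n-1)/2-|E|}` times the indicator that the corresponding graph
satisfies `A`. -/
noncomputable def erProb (n : ℕ) (p : ℝ) (A : SimpleGraph (Fin n) → Prop) : ℝ :=
  ∑ E : Finset {e : Sym2 (Fin n) // ¬ e.IsDiag},
    if A (SimpleGraph.fromEdgeSet (Subtype.val '' (E : Set {e : Sym2 (Fin n) // ¬ e.IsDiag})))
    then p ^ E.card * (1 - p) ^ (Fintype.card {e : Sym2 (Fin n) // ¬ e.IsDiag} - E.card)
    else 0

open Finset


lemma sum_pow_card {α : Type*} [DecidableEq α] (s : Finset α) (p q : ℝ) :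
    ∑ t ∈ s.powerset, p ^ t.card * q ^ (s.card - t.card) = (p + q) ^ s.card := by
  have h := Finset.prod_add (fun _ : α => p) (fun _ : α => q) s
  rw [Finset.prod_const] at h
  rw [h]
  apply Finset.sum_congr rfl
  intro t ht
  rw [Finset.mem_powerset] at ht
  rw [Finset.prod_const, Finset.prod_const, Finset.card_sdiff_of_subset ht]

lemma sum_all_finsets {α : Type*} [Fintype α] (p q : ℝ) :
    ∑ E : Finset α, p ^ E.card * q ^ (Fintype.card α - E.card) = (p + q) ^ Fintype.card α := by
  have := sum_pow_card (Finset.univ : Finset α) p q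
  rw [Finset.powerset_univ] at this
  simpa [Finset.card_univ] using this

lemma sum_superset {α : Type*} [Fintype α] (F : Finset α) (p : ℝ) :
    ∑ E ∈ Finset.univ.filter (fun E => F ⊆ E),
      p ^ E.card * (1 - p) ^ (Fintype.card α - E.card) = p ^ F.card := by
  have hdisj : ∀ {t : Finset α}, t ⊆ Fᶜ → Disjoint F t := by
    intro t ht
    exact Finset.disjoint_left.2 fun a haF hat => (by simpa using ht hat : a ∉ F) haF
  have himg : Finset.univ.filter (fun E => F ⊆ E) = (Fᶜ).powerset.image (fun t => F ∪ t) := by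
    ext E
    simp only [Finset.mem_filter, Finset.mem_univ, true_and, Finset.mem_image,
      Finset.mem_powerset]
    constructor
    · intro h
      refine ⟨E \ F, fun a ha => ?_, Finset.union_sdiff_of_subset h⟩
      simp only [Finset.mem_sdiff] at ha
      simpa using ha.2
    · rintro ⟨t, _, rfl⟩
      exact Finset.subset_union_left
  rw [himg, Finset.sum_image (by
    intro a ha b hb hab
    rw [Finset.mem_coe, Finset.mem_powerset] at ha hb
    have : (F ∪ a) \ F = (F ∪ b) \ F := by rw [show F ∪ a = F ∪ b from hab]
    rwa [Finset.union_sdiff_cancel_left (hdisj ha), Finset.union_sdiff_cancel_left (hdisj hb)]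
      at this)]
  have : ∀ t ∈ (Fᶜ).powerset,
      p ^ (F ∪ t).card * (1 - p) ^ (Fintype.card α - (F ∪ t).card)
        = p ^ F.card * (p ^ t.card * (1 - p) ^ ((Fᶜ).card - t.card)) := by
    intro t ht
    rw [Finset.mem_powerset] at ht
    rw [Finset.card_union_of_disjoint (hdisj ht), pow_add, Finset.card_compl, Nat.sub_sub]
    ring
  rw [Finset.sum_congr rfl this, ← Finset.mul_sum, sum_pow_card]
  norm_num


lemma union_bound {α : Type*} [Fintype α] (p : ℝ) (hp : 0 ≤ p) (hp1 : p ≤ 1)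
    {ι : Type*} (W : Finset ι) (Fm : ι → Finset α) (bad : Finset α → Prop)
    (h : ∀ E : Finset α, bad E → ∃ i ∈ W, Fm i ⊆ E) :
    ∑ E : Finset α, (if bad E then p ^ E.card * (1 - p) ^ (Fintype.card α - E.card) else 0)
      ≤ ∑ i ∈ W, p ^ (Fm i).card := by
  have hw : ∀ E : Finset α, 0 ≤ p ^ E.card * (1 - p) ^ (Fintype.card α - E.card) :=
    fun E => mul_nonneg (pow_nonneg hp _) (pow_nonneg (by linarith) _)
  calc ∑ E : Finset α, (if bad E then p ^ E.card * (1 - p) ^ (Fintype.card α - E.card) else 0)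
      ≤ ∑ E : Finset α, ∑ i ∈ W,
          (if Fm i ⊆ E then p ^ E.card * (1 - p) ^ (Fintype.card α - E.card) else 0) := by
        apply Finset.sum_le_sum
        intro E _
        by_cases hb : bad E
        · rw [if_pos hb]
          obtain ⟨i₀, hi₀, hsub⟩ := h E hb
          have := Finset.single_le_sum (f := fun i =>
            (if Fm i ⊆ E then p ^ E.card * (1 - p) ^ (Fintype.card α - E.card) else 0))
            (fun i _ => by by_cases hfi : Fm i ⊆ E <;> simp [hfi, hw E]) hi₀
          simpa only [if_pos hsub] using this
        · rw [if_neg hb]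
          exact Finset.sum_nonneg fun i _ => by by_cases hfi : Fm i ⊆ E <;> simp [hfi, hw E]
    _ = ∑ i ∈ W, ∑ E : Finset α,
          (if Fm i ⊆ E then p ^ E.card * (1 - p) ^ (Fintype.card α - E.card) else 0) :=
        Finset.sum_comm
    _ ≤ ∑ i ∈ W, p ^ (Fm i).card := by
        apply Finset.sum_le_sum
        intro i _
        rw [← Finset.sum_filter, sum_superset]

lemma erProb_add_compl (n : ℕ) (p : ℝ) (A : SimpleGraph (Fin n) → Prop) :
    erProb n p A + erProb n p (fun G => ¬ A G) = 1 := by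
  unfold erProb
  rw [← Finset.sum_add_distrib]
  refine Eq.trans (Finset.sum_congr rfl fun E _ => ?_)
    ((sum_all_finsets p (1 - p)).trans (by norm_num))
  by_cases h : A (SimpleGraph.fromEdgeSet
      (Subtype.val '' (E : Set {e : Sym2 (Fin n) // ¬ e.IsDiag}))) <;> simp [h]

lemma erProb_nonneg (n : ℕ) (p : ℝ) (hp : 0 ≤ p) (hp1 : p ≤ 1) (A : SimpleGraph (Fin n) → Prop) :
    0 ≤ erProb n p A := by
  apply Finset.sum_nonneg
  intro E _
  have : (0:ℝ) ≤ p ^ E.card * (1 - p) ^ (Fintype.card {e : Sym2 (Fin n) // ¬ e.IsDiag} - E.card) :=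
    mul_nonneg (pow_nonneg hp _) (pow_nonneg (by linarith) _)
  split
  · exact this
  · exact le_refl 0

abbrev EK (n : ℕ) := {e : Sym2 (Fin n) // ¬ e.IsDiag}

noncomputable def pairsIn (n : ℕ) (U : Finset (Fin n)) : Finset (EK n) :=
  Finset.univ.filter (fun e => ∀ v ∈ (e : Sym2 (Fin n)), v ∈ U)

noncomputable def mOf (ε : ℝ) (u : ℕ) : ℕ := ⌊(1+ε)*u⌋₊ + 1

lemma map_val_not_diag {V : Type*} {U : Finset V} (e : Sym2 {x : V // x ∈ U})
    (h : ¬ e.IsDiag) : ¬ (Sym2.map Subtype.val e).IsDiag := by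
  induction e using Sym2.ind with
  | _ a b =>
    simp only [Sym2.map_pair_eq, Sym2.mk_isDiag_iff] at h ⊢
    exact fun hab => h (Subtype.ext hab)

lemma pairs_card (n : ℕ) (U : Finset (Fin n)) : (pairsIn n U).card ≤ (U.card).choose 2 := by
  set g : {e : Sym2 {x : Fin n // x ∈ U} // ¬ e.IsDiag} → EK n :=
    fun e => ⟨Sym2.map Subtype.val e.1, map_val_not_diag e.1 e.2⟩ with hg
  have hsub : pairsIn n U ⊆ Finset.univ.image g := by
    intro e he
    rw [Finset.mem_image]
    obtain ⟨ev, hd⟩ := e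
    induction ev using Sym2.ind with
    | _ a b =>
      simp only [pairsIn, Finset.mem_filter] at he
      have ha : a ∈ U := he.2 a (Sym2.mem_mk_left a b)
      have hb : b ∈ U := he.2 b (Sym2.mem_mk_right a b)
      refine ⟨⟨s(⟨a, ha⟩, ⟨b, hb⟩), ?_⟩, Finset.mem_univ _, ?_⟩
      · simp only [Sym2.mk_isDiag_iff] at hd ⊢
        exact fun hab => hd (congrArg Subtype.val hab)
      · apply Subtype.ext
        simp [hg, Sym2.map_pair_eq]
  calc (pairsIn n U).card ≤ (Finset.univ.image g).card := Finset.card_le_card hsub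
    _ ≤ (Finset.univ : Finset {e : Sym2 {x : Fin n // x ∈ U} // ¬ e.IsDiag}).card :=
        Finset.card_image_le
    _ = (U.card).choose 2 := by
        rw [Finset.card_univ, Sym2.card_subtype_not_diag, Fintype.card_coe]

lemma witness (n : ℕ) (ε ℓ : ℝ) (hε : 0 < ε) (E : Finset (EK n))
    (hbad : ¬ SparseR (SimpleGraph.fromEdgeSet (Subtype.val '' (E : Set (EK n)))) ℓ ε) :
    ∃ U : Finset (Fin n), ∃ F : Finset (EK n), 1 ≤ U.card ∧ (U.card : ℝ) ≤ ℓ ∧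
      F ∈ (pairsIn n U).powersetCard (mOf ε U.card) ∧ F ⊆ E := by
  unfold SparseR at hbad
  push_neg at hbad
  obtain ⟨U, hUl, hgt⟩ := hbad
  set G := SimpleGraph.fromEdgeSet (Subtype.val '' (E : Set (EK n))) with hG
  set P : EK n → Prop := fun e => ∀ v ∈ (e : Sym2 (Fin n)), v ∈ U with hP
  have hEW : EdgesWithin G U = Subtype.val '' ((E.filter P : Finset (EK n)) : Set (EK n)) := by
    ext e
    simp only [EdgesWithin, Set.mem_setOf_eq, Set.mem_sep_iff, hG,
      SimpleGraph.edgeSet_fromEdgeSet, Set.mem_diff, Set.mem_image, Finset.coe_filter,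
      Set.mem_setOf_eq]
    constructor
    · rintro ⟨⟨⟨e', he'E, rfl⟩, hnd⟩, hin⟩
      exact ⟨e', ⟨he'E, hin⟩, rfl⟩
    · rintro ⟨e', ⟨he'E, hin⟩, rfl⟩
      exact ⟨⟨⟨e', he'E, rfl⟩, e'.2⟩, hin⟩
  have hncard : (EdgesWithin G U).ncard = (E.filter P).card := by
    rw [hEW, Set.ncard_image_of_injective _ Subtype.val_injective, Set.ncard_coe_finset]
  set Uf := U.toFinset with hUf
  have hUcard : U.ncard = Uf.card := Set.ncard_eq_toFinset_card' U
  have hgt' : ((1 + ε) * Uf.card : ℝ) < (E.filter P).card := by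
    rw [← hncard, ← hUcard] at *
    exact_mod_cast hgt
  have hm : mOf ε Uf.card ≤ (E.filter P).card := by
    have h0 : (0:ℝ) ≤ (1 + ε) * Uf.card := by positivity
    have := (Nat.floor_lt h0).2 hgt'
    unfold mOf
    omega
  obtain ⟨F, hFsub, hFcard⟩ := Finset.exists_subset_card_eq hm
  refine ⟨Uf, F, ?_, ?_, ?_, fun e he => (Finset.filter_subset P E) (hFsub he)⟩
  · -- 1 ≤ Uf.card
    have hFne : F.Nonempty := Finset.card_pos.mp (by rw [hFcard]; unfold mOf; omega)
    obtain ⟨e0, he0⟩ := hFne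
    have hPe : P e0 := (Finset.mem_filter.mp (hFsub he0)).2
    have hx : (e0 : Sym2 (Fin n)).out.1 ∈ (e0 : Sym2 (Fin n)) := Sym2.out_fst_mem _
    have : (e0 : Sym2 (Fin n)).out.1 ∈ Uf := Set.mem_toFinset.mpr (hPe _ hx)
    exact Finset.card_pos.mpr ⟨_, this⟩
  · rw [← hUcard]; exact_mod_cast hUl
  · rw [Finset.mem_powersetCard]
    refine ⟨fun e he => ?_, hFcard⟩
    have hPe : P e := (Finset.mem_filter.mp (hFsub he)).2
    simp only [pairsIn, Finset.mem_filter, Finset.mem_univ, true_and]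
    exact fun v hv => Set.mem_toFinset.mpr (hPe v hv)

noncomputable def Wset (n : ℕ) (ℓ ε : ℝ) : Finset (Finset (Fin n) × Finset (EK n)) :=
  Finset.univ.filter (fun UF => 1 ≤ UF.1.card ∧ (UF.1.card : ℝ) ≤ ℓ ∧
    UF.2 ∈ (pairsIn n UF.1).powersetCard (mOf ε UF.1.card))

lemma count_bound (n : ℕ) (ℓ ε p : ℝ) (hp : 0 ≤ p) :
    ∑ i ∈ Wset n ℓ ε, p ^ i.2.card
      ≤ ∑ u ∈ Finset.range (n+1), (n.choose u : ℝ) *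
          (if 1 ≤ u ∧ (u:ℝ) ≤ ℓ then (((u.choose 2).choose (mOf ε u) : ℕ) : ℝ) * p ^ (mOf ε u)
           else 0) := by
  set g : ℕ → ℝ := fun u =>
    if 1 ≤ u ∧ (u:ℝ) ≤ ℓ then (((u.choose 2).choose (mOf ε u) : ℕ) : ℝ) * p ^ (mOf ε u) else 0
    with hgdef
  have hstep1 : ∑ i ∈ Wset n ℓ ε, p ^ i.2.card
      = ∑ i ∈ Wset n ℓ ε, p ^ (mOf ε i.1.card) := by
    apply Finset.sum_congr rfl
    intro i hi
    simp only [Wset, Finset.mem_filter] at hi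
    rw [(Finset.mem_powersetCard.1 hi.2.2.2).2]
  have hstep2 : ∑ i ∈ Wset n ℓ ε, p ^ (mOf ε i.1.card) ≤ ∑ U : Finset (Fin n), g U.card := by
    unfold Wset
    rw [Finset.sum_filter, Fintype.sum_prod_type]
    apply Finset.sum_le_sum
    intro U _
    by_cases hc : 1 ≤ U.card ∧ (U.card:ℝ) ≤ ℓ
    · have hcong : (∑ F : Finset (EK n), if 1 ≤ U.card ∧ (U.card : ℝ) ≤ ℓ ∧
            F ∈ (pairsIn n U).powersetCard (mOf ε U.card) then p ^ (mOf ε U.card) else 0)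
          = ∑ F ∈ (pairsIn n U).powersetCard (mOf ε U.card), p ^ (mOf ε U.card) := by
        rw [← Finset.sum_filter]
        apply Finset.sum_congr _ (fun _ _ => rfl)
        ext F
        simp only [Finset.mem_filter, Finset.mem_univ, true_and]
        tauto
      rw [hcong, Finset.sum_const, Finset.card_powersetCard]
      simp only [nsmul_eq_mul, hgdef, if_pos hc]
      apply mul_le_mul_of_nonneg_right _ (pow_nonneg hp _)
      exact_mod_cast Nat.choose_le_choose _ (pairs_card n U)
    · simp only [hgdef, if_neg hc]
      apply le_of_eq
      apply Finset.sum_eq_zero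
      intro F _
      rw [if_neg (by tauto)]
  have hstep3 : ∑ U : Finset (Fin n), g U.card
      = ∑ u ∈ Finset.range (n+1), (n.choose u : ℝ) * g u := by
    have := Finset.sum_powerset_apply_card (f := g) (x := (Finset.univ : Finset (Fin n)))
    rw [Finset.powerset_univ] at this
    simp only [Finset.card_univ, Fintype.card_fin, nsmul_eq_mul] at this
    exact this
  calc _ = _ := hstep1
    _ ≤ _ := hstep2
    _ = _ := hstep3

lemma pow_self_le (k : ℕ) : (k:ℝ)^k ≤ Real.exp 1 ^ k * k.factorial := by
  induction k with
  | zero => simp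
  | succ u ih =>
    rcases Nat.eq_zero_or_pos u with rfl | hu
    · simpa using Real.one_le_exp zero_le_one
    have hu0 : (0:ℝ) < u := by exact_mod_cast hu
    have key : ((u:ℝ)+1)^u ≤ Real.exp 1 * (u:ℝ)^u := by
      have h1 : ((u:ℝ)+1)/u ≤ Real.exp (1/u) := by
        have := Real.add_one_le_exp (1/(u:ℝ))
        calc ((u:ℝ)+1)/u = 1/(u:ℝ) + 1 := by field_simp; ring
          _ ≤ Real.exp (1/u) := by linarith
      have h2 : (((u:ℝ)+1)/u)^u ≤ Real.exp (1/u) ^ u :=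
        pow_le_pow_left₀ (by positivity) h1 u
      rw [← Real.exp_nat_mul] at h2
      have h3 : (u:ℝ) * (1/(u:ℝ)) = 1 := by field_simp
      rw [h3] at h2
      calc ((u:ℝ)+1)^u = (((u:ℝ)+1)/u)^u * (u:ℝ)^u := by
            rw [div_pow, div_mul_cancel₀]
            positivity
        _ ≤ Real.exp 1 * (u:ℝ)^u := by
            apply mul_le_mul_of_nonneg_right h2 (by positivity)
    have : ((u:ℝ)+1)^(u+1) = ((u:ℝ)+1) * ((u:ℝ)+1)^u := by ring
    calc ((u+1:ℕ):ℝ)^(u+1) = ((u:ℝ)+1) * ((u:ℝ)+1)^u := by push_cast; ring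
      _ ≤ ((u:ℝ)+1) * (Real.exp 1 * (u:ℝ)^u) :=
          mul_le_mul_of_nonneg_left key (by positivity)
      _ ≤ ((u:ℝ)+1) * (Real.exp 1 * (Real.exp 1 ^ u * u.factorial)) := by
          apply mul_le_mul_of_nonneg_left _ (by positivity)
          exact mul_le_mul_of_nonneg_left ih (Real.exp_pos 1).le
      _ = Real.exp 1 ^ (u+1) * ((u+1).factorial) := by
          rw [Nat.factorial_succ]
          push_cast
          ring
lemma choose_le_ealg (a m : ℕ) (hm : 1 ≤ m) :
    (a.choose m : ℝ) ≤ (Real.exp 1 * a / m) ^ m := by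
  have h1 : (a.choose m : ℝ) ≤ (a:ℝ)^m / m.factorial := Nat.choose_le_pow_div m a
  have hm0 : (0:ℝ) < m := by exact_mod_cast hm
  have hf : (0:ℝ) < m.factorial := by exact_mod_cast m.factorial_pos
  have h2 : ((m:ℝ))^m ≤ Real.exp 1 ^ m * m.factorial := pow_self_le m
  calc (a.choose m : ℝ) ≤ (a:ℝ)^m / m.factorial := h1
    _ ≤ Real.exp 1 ^ m * (a:ℝ)^m / (m:ℝ)^m := by
        rw [div_le_div_iff₀ hf (by positivity)]
        calc (a:ℝ)^m * (m:ℝ)^m ≤ (a:ℝ)^m * (Real.exp 1 ^ m * m.factorial) :=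
              mul_le_mul_of_nonneg_left h2 (by positivity)
          _ = Real.exp 1 ^ m * (a:ℝ)^m * m.factorial := by ring
    _ = (Real.exp 1 * a / m) ^ m := by
        rw [div_pow, mul_pow]

noncomputable def thC (d : ℕ) : ℝ := Real.log (7.6 / Real.exp 1 ^ 2) / Real.log (4 * d)

lemma e_lt : Real.exp 1 < 2.7182818286 := Real.exp_one_lt_d9
lemma e_gt : 2.7182818283 < Real.exp 1 := Real.exp_one_gt_d9

lemma esq_lt : Real.exp 1 ^ 2 < 7.39 := by
  nlinarith [e_lt, Real.exp_pos 1]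

lemma esq_gt : (7.3:ℝ) < Real.exp 1 ^ 2 := by
  nlinarith [e_gt]

lemma log4d_ge_one {d : ℕ} (hd : 1 ≤ d) : 1 ≤ Real.log (4 * d) := by
  have hd1 : (1:ℝ) ≤ d := by exact_mod_cast hd
  rw [Real.le_log_iff_exp_le (by positivity)]
  nlinarith [e_lt]

lemma thC_pos {d : ℕ} (hd : 1 ≤ d) : 0 < thC d := by
  apply div_pos
  · apply Real.log_pos
    rw [lt_div_iff₀ (by positivity)]
    nlinarith [esq_lt]
  · linarith [log4d_ge_one hd]

lemma thC_le_one {d : ℕ} (hd : 1 ≤ d) : thC d ≤ 1 := by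
  rw [thC, div_le_one (by linarith [log4d_ge_one hd])]
  calc Real.log (7.6 / Real.exp 1 ^ 2) ≤ Real.log (Real.exp 1) := by
        apply Real.log_le_log (by positivity)
        rw [div_le_iff₀ (by positivity)]
        nlinarith [esq_gt, e_gt]
    _ = 1 := Real.log_exp 1
    _ ≤ Real.log (4 * d) := log4d_ge_one hd

lemma rpow_thC {d : ℕ} (hd : 1 ≤ d) :
    (4 * (d:ℝ)) ^ (thC d) = 7.6 / Real.exp 1 ^ 2 := by
  have hd1 : (1:ℝ) ≤ d := by exact_mod_cast hd
  have h4d : (0:ℝ) < 4 * d := by positivity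
  rw [Real.rpow_def_of_pos h4d, thC, mul_comm, div_mul_cancel₀]
  · exact Real.exp_log (by positivity)
  · linarith [log4d_ge_one hd]


lemma pow_rpow_comm {A : ℝ} (hA : 0 ≤ A) (u : ℕ) (y : ℝ) : (A ^ u) ^ y = (A ^ y) ^ u := by
  rw [← Real.rpow_natCast A u, ← Real.rpow_mul hA, mul_comm, Real.rpow_mul hA,
    Real.rpow_natCast]

lemma per_u (d n u : ℕ) (ε δ : ℝ) (hd : 1 ≤ d) (hn : 1 ≤ n) (hu : 1 ≤ u)
    (hε : 0 < ε) (hδ : 0 < δ)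
    (hx : (u:ℝ) ≤ (4 * (d:ℝ)) ^ (-((1+δ)*(1+ε)/ε)) * n) :
    (n.choose u : ℝ) * ((u.choose 2).choose (mOf ε u) : ℝ) * ((d:ℝ)/n) ^ (mOf ε u)
      ≤ (Real.exp 1 * d / 2) * u * (n:ℝ) ^ (-(thC d)) * 0.95 ^ u := by
  set E1 := Real.exp 1 with hE1
  have hE1pos : 0 < E1 := Real.exp_pos 1
  have hE1two : 2 ≤ E1 := by nlinarith [e_gt]
  have hd1 : (1:ℝ) ≤ d := by exact_mod_cast hd
  have hn1 : (1:ℝ) ≤ n := by exact_mod_cast hn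
  have hu1 : (1:ℝ) ≤ u := by exact_mod_cast hu
  have hn0 : (0:ℝ) < n := by linarith
  have hu0 : (0:ℝ) < u := by linarith
  set β := (1+δ)*(1+ε)/ε with hβ
  set X := (4 * (d:ℝ)) ^ (-β) with hX
  set x := (u:ℝ)/n with hxdef
  have hx0 : 0 < x := by positivity
  have hxX : x ≤ X := by
    rw [hxdef, div_le_iff₀ hn0]
    exact hx
  have h4d1 : (1:ℝ) ≤ 4 * d := by linarith
  have h4d0 : (0:ℝ) < 4 * d := by linarith
  have hβ1 : 1 ≤ β := by
    rw [hβ, le_div_iff₀ hε]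
    nlinarith
  have hX4d : X ≤ (4 * (d:ℝ))⁻¹ := by
    rw [hX]
    calc (4 * (d:ℝ)) ^ (-β) ≤ (4 * (d:ℝ)) ^ (-1 : ℝ) :=
          Real.rpow_le_rpow_of_exponent_le h4d1 (by linarith)
      _ = (4 * (d:ℝ))⁻¹ := Real.rpow_neg_one _
  set m := mOf ε u with hm
  have hm1 : 1 ≤ m := by unfold m; unfold mOf; omega
  have hmu1 : u + 1 ≤ m := by
    have : u ≤ ⌊(1+ε)*u⌋₊ := Nat.le_floor (by nlinarith)
    unfold m; unfold mOf; omega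
  have hmreal : (1+ε) * u ≤ (m:ℝ) := by
    have := Nat.lt_floor_add_one ((1+ε)*u)
    have hcast : ((⌊(1+ε)*u⌋₊ + 1 : ℕ) : ℝ) = (⌊(1+ε)*u⌋₊ : ℝ) + 1 := by push_cast; ring
    unfold m; unfold mOf
    rw [hcast]
    linarith
  set c := E1 * x * d / 2 with hc
  have hc0 : 0 < c := by positivity
  have hc_le : c ≤ E1 / 8 := by
    rw [hc]
    calc E1 * x * d / 2 ≤ E1 * (4 * (d:ℝ))⁻¹ * d / 2 := by
          have := hxX.trans hX4d
          have h2 : E1 * x ≤ E1 * (4 * (d:ℝ))⁻¹ := by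
            apply mul_le_mul_of_nonneg_left this hE1pos.le
          nlinarith [hd1]
      _ = E1 / 8 := by field_simp; ring
  have hc1 : c < 1 := by
    have : E1 / 8 < 1 := by nlinarith [e_lt]
    linarith
  -- Step 1
  have hstep1 : (n.choose u : ℝ) * ((u.choose 2).choose m : ℝ) * ((d:ℝ)/n) ^ m
      ≤ (E1 * n / u) ^ u * c ^ m := by
    have h1 : (n.choose u : ℝ) ≤ (E1 * n / u) ^ u := choose_le_ealg n u hu
    have h2 : ((u.choose 2).choose m : ℝ) ≤ (E1 * u / 2) ^ m := by
      calc ((u.choose 2).choose m : ℝ) ≤ (E1 * (u.choose 2) / m) ^ m := choose_le_ealg _ m hm1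
        _ ≤ (E1 * u / 2) ^ m := by
            apply pow_le_pow_left₀ (by positivity)
            have hnat : (u.choose 2) * 2 ≤ u * m := by
              have h1 : u.choose 2 = u * (u-1) / 2 := Nat.choose_two_right u
              have h2 : u * (u-1) / 2 * 2 ≤ u * (u-1) := Nat.div_mul_le_self _ 2
              have h3 : u * (u-1) ≤ u * m := Nat.mul_le_mul_left u (by omega)
              omega
            have hcast : ((u.choose 2 : ℕ):ℝ) * 2 ≤ (u:ℝ) * m := by exact_mod_cast hnat
            have hm0 : (0:ℝ) < m := by exact_mod_cast hm1
            rw [div_le_div_iff₀ hm0 (by norm_num : (0:ℝ) < 2)]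
            nlinarith [hE1pos]
    have hpn : (0:ℝ) ≤ ((d:ℝ)/n) ^ m := by positivity
    have hcm : (E1 * u / 2) ^ m * ((d:ℝ)/n) ^ m = c ^ m := by
      rw [← mul_pow]
      congr 1
      rw [hc, hxdef]
      field_simp
    calc (n.choose u : ℝ) * ((u.choose 2).choose m : ℝ) * ((d:ℝ)/n) ^ m
        ≤ (E1 * n / u) ^ u * (E1 * u / 2) ^ m * ((d:ℝ)/n) ^ m := by
          apply mul_le_mul_of_nonneg_right _ hpn
          apply mul_le_mul h1 h2 (by positivity) (by positivity)
      _ = (E1 * n / u) ^ u * c ^ m := by rw [mul_assoc, hcm]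
  -- Step 2: A bound
  have hcore : (E1 * n / u) * c ^ ((1:ℝ)+ε) ≤ E1^2 / 8 := by
    have henu : E1 * n / u = E1 / x := by rw [hxdef]; field_simp
    have hced : c = (E1 * d / 2) * x := by rw [hc]; ring
    have hcrp : c ^ ((1:ℝ)+ε) = (E1*d/2) ^ ((1:ℝ)+ε) * x ^ ((1:ℝ)+ε) := by
      rw [hced, Real.mul_rpow (by positivity) hx0.le]
    have hxsplit : x ^ ((1:ℝ)+ε) = x * x ^ ε := by
      rw [Real.rpow_add hx0, Real.rpow_one]
    have hLHS : (E1 * n / u) * c ^ ((1:ℝ)+ε) = E1 * ((E1*d/2) ^ ((1:ℝ)+ε) * x ^ ε) := by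
      rw [henu, hcrp, hxsplit]
      field_simp
    rw [hLHS]
    have hxe : x ^ ε ≤ X ^ ε := Real.rpow_le_rpow hx0.le hxX hε.le
    have hXe : X ^ ε = ((4*(d:ℝ)) ^ (-(1+δ))) ^ ((1:ℝ)+ε) := by
      rw [hX, ← Real.rpow_mul h4d0.le, ← Real.rpow_mul h4d0.le]
      congr 1
      rw [hβ]
      field_simp
    have hinner_pos : (0:ℝ) < (E1*d/2) * (4*(d:ℝ)) ^ (-(1+δ)) := by
      have := Real.rpow_pos_of_pos h4d0 (-(1+δ))
      positivity
    have hinner_le : (E1*d/2) * (4*(d:ℝ)) ^ (-(1+δ)) ≤ E1/8 := by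
      have h1 : (4*(d:ℝ)) ^ (-(1+δ)) ≤ (4*(d:ℝ))⁻¹ := by
        calc (4*(d:ℝ)) ^ (-(1+δ)) ≤ (4*(d:ℝ)) ^ (-1:ℝ) :=
              Real.rpow_le_rpow_of_exponent_le h4d1 (by linarith)
          _ = (4*(d:ℝ))⁻¹ := Real.rpow_neg_one _
      calc (E1*d/2) * (4*(d:ℝ)) ^ (-(1+δ)) ≤ (E1*d/2) * (4*(d:ℝ))⁻¹ :=
            mul_le_mul_of_nonneg_left h1 (by positivity)
        _ = E1/8 := by field_simp; ring
    have hE18 : E1/8 ≤ 1 := by nlinarith [e_lt]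
    have hmain : (E1*d/2) ^ ((1:ℝ)+ε) * x ^ ε ≤ E1/8 := by
      calc (E1*d/2) ^ ((1:ℝ)+ε) * x ^ ε ≤ (E1*d/2) ^ ((1:ℝ)+ε) * X ^ ε :=
            mul_le_mul_of_nonneg_left hxe (by positivity)
        _ = ((E1*d/2) * (4*(d:ℝ)) ^ (-(1+δ))) ^ ((1:ℝ)+ε) := by
            rw [hXe, ← Real.mul_rpow (by positivity) (Real.rpow_pos_of_pos h4d0 _).le]
        _ ≤ (E1/8) ^ ((1:ℝ)+ε) :=
            Real.rpow_le_rpow hinner_pos.le hinner_le (by linarith)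
        _ ≤ (E1/8) ^ (1:ℝ) :=
            Real.rpow_le_rpow_of_exponent_ge (by positivity) hE18 (by linarith)
        _ = E1/8 := Real.rpow_one _
    calc E1 * ((E1*d/2) ^ ((1:ℝ)+ε) * x ^ ε) ≤ E1 * (E1/8) :=
          mul_le_mul_of_nonneg_left hmain hE1pos.le
      _ = E1^2/8 := by ring
  have hTA : (E1 * n / u) ^ u * c ^ m ≤ ((E1^2/8)) ^ u := by
    have hcm : c ^ m ≤ c ^ (((1:ℝ)+ε) * u) := by
      rw [← Real.rpow_natCast c m]
      exact Real.rpow_le_rpow_of_exponent_ge hc0 hc1.le hmreal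
    have heq : (E1 * n / u) ^ u * c ^ (((1:ℝ)+ε) * u) = ((E1 * n / u) * c ^ ((1:ℝ)+ε)) ^ u := by
      rw [mul_pow]
      congr 1
      rw [← Real.rpow_natCast (c ^ ((1:ℝ)+ε)) u, ← Real.rpow_mul hc0.le]
    calc (E1 * n / u) ^ u * c ^ m ≤ (E1 * n / u) ^ u * c ^ (((1:ℝ)+ε) * u) :=
          mul_le_mul_of_nonneg_left hcm (by positivity)
      _ = ((E1 * n / u) * c ^ ((1:ℝ)+ε)) ^ u := heq
      _ ≤ (E1^2/8) ^ u := by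
          apply pow_le_pow_left₀ _ hcore
          positivity
  -- Step 3: B bound
  have hTB : (E1 * n / u) ^ u * c ^ m ≤ c * (E1^2*d/2) ^ u := by
    have h1 : c ^ m ≤ c ^ (u+1) := pow_le_pow_of_le_one hc0.le hc1.le hmu1
    have h3 : (E1 * n / u) * c = E1^2*d/2 := by
      rw [hc, hxdef]
      field_simp
    calc (E1 * n / u) ^ u * c ^ m ≤ (E1 * n / u) ^ u * c ^ (u+1) :=
          mul_le_mul_of_nonneg_left h1 (by positivity)
      _ = c * ((E1 * n / u) * c) ^ u := by rw [pow_succ, mul_pow]; ring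
      _ = c * (E1^2*d/2) ^ u := by rw [h3]
  -- Step 4: combine
  set θ := thC d with hθdef
  have hθ0 : 0 < θ := thC_pos hd
  have hθ1 : θ ≤ 1 := thC_le_one hd
  set T := (E1 * n / u) ^ u * c ^ m with hT
  have hT0 : 0 < T := by rw [hT]; positivity
  have hsplit : T = T ^ ((1:ℝ)-θ) * T ^ θ := by
    rw [← Real.rpow_add hT0]
    norm_num
  have hcomb : T ≤ ((E1^2/8) ^ u) ^ ((1:ℝ)-θ) * (c * (E1^2*d/2) ^ u) ^ θ := by
    rw [hsplit]
    exact mul_le_mul (Real.rpow_le_rpow hT0.le hTA (by linarith))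
      (Real.rpow_le_rpow hT0.le hTB hθ0.le)
      (Real.rpow_nonneg hT0.le θ) (Real.rpow_nonneg (by positivity) _)
  have hfact : ((E1^2/8) ^ u) ^ ((1:ℝ)-θ) * (c * (E1^2*d/2) ^ u) ^ θ
      = c ^ θ * ((E1^2/8) ^ ((1:ℝ)-θ) * (E1^2*d/2) ^ θ) ^ u := by
    rw [Real.mul_rpow hc0.le (by positivity), pow_rpow_comm (by positivity) u,
      pow_rpow_comm (by positivity) u, mul_pow]
    ring
  have hbracket : (E1^2/8) ^ ((1:ℝ)-θ) * (E1^2*d/2) ^ θ = 0.95 := by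
    have h1 : E1^2*(d:ℝ)/2 = (E1^2/8) * (4*d) := by ring
    rw [h1, Real.mul_rpow (by positivity) (by positivity), ← mul_assoc,
      ← Real.rpow_add (by positivity : (0:ℝ) < E1^2/8)]
    have h2 : (1:ℝ) - θ + θ = 1 := by ring
    rw [h2, Real.rpow_one, hθdef, rpow_thC hd]
    have h4 : Real.exp 2 = E1 ^ 2 := by rw [hE1, ← Real.exp_nat_mul]; norm_num
    field_simp
    rw [hE1]
    ring
  have hcθ : c ^ θ ≤ (E1*d/2) * u * (n:ℝ) ^ (-θ) := by
    have h1 : c ^ θ = (E1*d/2) ^ θ * ((u:ℝ) ^ θ * (n:ℝ) ^ (-θ)) := by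
      have : c = (E1*d/2) * ((u:ℝ)/n) := by rw [hc, hxdef]; ring
      rw [this, Real.mul_rpow (by positivity) (by positivity),
        Real.div_rpow hu0.le hn0.le, Real.rpow_neg hn0.le, div_eq_mul_inv]
      ring
    rw [h1]
    have h2 : (E1*d/2) ^ θ ≤ E1*d/2 := by
      calc (E1*d/2) ^ θ ≤ (E1*d/2) ^ (1:ℝ) :=
            Real.rpow_le_rpow_of_exponent_le (by nlinarith) hθ1
        _ = E1*d/2 := Real.rpow_one _
    have h3 : (u:ℝ) ^ θ ≤ u := by
      calc (u:ℝ) ^ θ ≤ (u:ℝ) ^ (1:ℝ) := Real.rpow_le_rpow_of_exponent_le hu1 hθ1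
        _ = u := Real.rpow_one _
    have hnneg : (0:ℝ) ≤ (n:ℝ) ^ (-θ) := Real.rpow_nonneg hn0.le _
    calc (E1*d/2) ^ θ * ((u:ℝ) ^ θ * (n:ℝ) ^ (-θ))
        ≤ (E1*d/2) * ((u:ℝ) * (n:ℝ) ^ (-θ)) := by
          apply mul_le_mul h2 _ (by positivity) (by positivity)
          exact mul_le_mul_of_nonneg_right h3 hnneg
      _ = (E1*d/2) * u * (n:ℝ) ^ (-θ) := by ring
  calc (n.choose u : ℝ) * ((u.choose 2).choose m : ℝ) * ((d:ℝ)/n) ^ m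
      ≤ T := hstep1
    _ ≤ c ^ θ * ((E1^2/8) ^ ((1:ℝ)-θ) * (E1^2*d/2) ^ θ) ^ u := by
        rw [← hfact]; exact hcomb
    _ = c ^ θ * 0.95 ^ u := by rw [hbracket]
    _ ≤ ((E1*d/2) * u * (n:ℝ) ^ (-θ)) * 0.95 ^ u :=
        mul_le_mul_of_nonneg_right hcθ (by positivity)
    _ = (E1 * d / 2) * u * (n:ℝ) ^ (-θ) * 0.95 ^ u := by ring



lemma geom_sum_bound (N : ℕ) : ∑ u ∈ Finset.range N, (u:ℝ) * 0.95 ^ u ≤ 380 := by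
  have hr : ‖(0.95:ℝ)‖ < 1 := by rw [Real.norm_eq_abs, abs_of_pos] <;> norm_num
  have hsum : Summable (fun u : ℕ => (u:ℝ) * 0.95 ^ u) := by
    have := summable_pow_mul_geometric_of_norm_lt_one 1 hr (R := ℝ)
    simpa using this
  have htsum : ∑' u : ℕ, (u:ℝ) * 0.95 ^ u = 0.95 / (1 - 0.95) ^ 2 :=
    tsum_coe_mul_geometric_of_norm_lt_one hr
  calc ∑ u ∈ Finset.range N, (u:ℝ) * 0.95 ^ u
      ≤ ∑' u : ℕ, (u:ℝ) * 0.95 ^ u :=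
        Summable.sum_le_tsum _ (fun i _ => by positivity) hsum
    _ = 0.95 / (1 - 0.95) ^ 2 := htsum
    _ ≤ 380 := by norm_num

lemma bad_le (d : ℕ) (hd : 1 ≤ d) (ε δ : ℝ) (hε : 0 < ε) (hδ : 0 < δ)
    (n : ℕ) (hn : 1 ≤ n) (hdn : d ≤ n) :
    erProb n ((d:ℝ)/n) (fun G => ¬ SparseR G ((4*(d:ℝ)) ^ (-((1+δ)*(1+ε)/ε)) * n) ε)
      ≤ (Real.exp 1 * d / 2) * 380 * (n:ℝ) ^ (-(thC d)) := by
  set ℓ := (4*(d:ℝ)) ^ (-((1+δ)*(1+ε)/ε)) * n with hℓ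
  set p := (d:ℝ)/n with hp
  have hn0 : (0:ℝ) < n := by exact_mod_cast hn
  have hp0 : 0 ≤ p := by positivity
  have hp1 : p ≤ 1 := by
    rw [hp, div_le_one hn0]
    exact_mod_cast hdn
  have hwit : ∀ E : Finset (EK n),
      (fun E : Finset (EK n) =>
        ¬ SparseR (SimpleGraph.fromEdgeSet (Subtype.val '' (E : Set (EK n)))) ℓ ε) E →
      ∃ i ∈ Wset n ℓ ε, Prod.snd i ⊆ E := by
    intro E hbad
    obtain ⟨U, F, h1, h2, h3, h4⟩ := witness n ε ℓ hε E hbad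
    refine ⟨(U, F), ?_, h4⟩
    simp only [Wset, Finset.mem_filter, Finset.mem_univ, true_and]
    exact ⟨h1, h2, h3⟩
  have h1 : erProb n p (fun G => ¬ SparseR G ℓ ε) ≤ ∑ i ∈ Wset n ℓ ε, p ^ (Prod.snd i).card := by
    have := union_bound p hp0 hp1 (Wset n ℓ ε) Prod.snd
      (fun E : Finset (EK n) =>
        ¬ SparseR (SimpleGraph.fromEdgeSet (Subtype.val '' (E : Set (EK n)))) ℓ ε) hwit
    exact this
  have h2 := count_bound n ℓ ε p hp0
  have h3 : ∑ u ∈ Finset.range (n+1), (n.choose u : ℝ) *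
        (if 1 ≤ u ∧ (u:ℝ) ≤ ℓ then (((u.choose 2).choose (mOf ε u) : ℕ) : ℝ) * p ^ (mOf ε u)
         else 0)
      ≤ ∑ u ∈ Finset.range (n+1),
          (Real.exp 1 * d / 2) * (n:ℝ) ^ (-(thC d)) * ((u:ℝ) * 0.95 ^ u) := by
    apply Finset.sum_le_sum
    intro u _
    by_cases hc : 1 ≤ u ∧ (u:ℝ) ≤ ℓ
    · rw [if_pos hc]
      have := per_u d n u ε δ hd hn hc.1 hε hδ (by rw [hℓ] at hc; exact hc.2)
      calc (n.choose u : ℝ) * ((((u.choose 2).choose (mOf ε u) : ℕ) : ℝ) * p ^ (mOf ε u))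
          = (n.choose u : ℝ) * (((u.choose 2).choose (mOf ε u) : ℕ) : ℝ) * ((d:ℝ)/n) ^ (mOf ε u) := by
            rw [hp]; ring
        _ ≤ (Real.exp 1 * d / 2) * u * (n:ℝ) ^ (-(thC d)) * 0.95 ^ u := this
        _ = (Real.exp 1 * d / 2) * (n:ℝ) ^ (-(thC d)) * ((u:ℝ) * 0.95 ^ u) := by ring
    · rw [if_neg hc, mul_zero]
      have : (0:ℝ) ≤ (n:ℝ) ^ (-(thC d)) := Real.rpow_nonneg hn0.le _
      positivity
  have h4 : ∑ u ∈ Finset.range (n+1),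
        (Real.exp 1 * d / 2) * (n:ℝ) ^ (-(thC d)) * ((u:ℝ) * 0.95 ^ u)
      ≤ (Real.exp 1 * d / 2) * 380 * (n:ℝ) ^ (-(thC d)) := by
    rw [← Finset.mul_sum]
    have hg := geom_sum_bound (n+1)
    have hfac : (0:ℝ) ≤ (Real.exp 1 * d / 2) * (n:ℝ) ^ (-(thC d)) := by
      have : (0:ℝ) ≤ (n:ℝ) ^ (-(thC d)) := Real.rpow_nonneg hn0.le _
      positivity
    calc (Real.exp 1 * d / 2) * (n:ℝ) ^ (-(thC d)) * (∑ u ∈ Finset.range (n+1), (u:ℝ) * 0.95 ^ u)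
        ≤ (Real.exp 1 * d / 2) * (n:ℝ) ^ (-(thC d)) * 380 := mul_le_mul_of_nonneg_left hg hfac
      _ = (Real.exp 1 * d / 2) * 380 * (n:ℝ) ^ (-(thC d)) := by ring
  calc erProb n p (fun G => ¬ SparseR G ℓ ε) ≤ _ := h1
    _ ≤ _ := h2
    _ ≤ _ := h3
    _ ≤ _ := h4

/-- sparsity lemma for Erdős–Rényi random graphs: for fixed `d ≥ 1` and
positive sequences `ε_n`, `δ_n` with `ε_n·δ_n·log n → ∞`, the probability that
`G ∼ G(n, d/n)` is `((4d)^{-(1+δ_n)(1+ε_n)/ε_n}·n, ε_n)`-sparse tends to `1`. -/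
theorem stmt_19 (d : ℕ) (hd : 0 < d) (ε δ : ℕ → ℝ)
    (hε : ∀ n, 0 < ε n) (hδ : ∀ n, 0 < δ n)
    (hlim : Filter.Tendsto (fun n => ε n * δ n * Real.log n)
      Filter.atTop Filter.atTop) :
    Filter.Tendsto
      (fun n => erProb n ((d : ℝ) / n) fun G =>
        SparseR G
          ((4 * (d : ℝ)) ^ (-((1 + δ n) * (1 + ε n) / ε n)) * n)
          (ε n))
      Filter.atTop (nhds 1) := by
  have hd1 : 1 ≤ d := hd
  have hθ0 : 0 < thC d := thC_pos hd1
  set f : ℕ → ℝ := fun n => erProb n ((d : ℝ) / n)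
    (fun G => ¬ SparseR G ((4 * (d : ℝ)) ^ (-((1 + δ n) * (1 + ε n) / ε n)) * n) (ε n)) with hf
  have hkey : (fun n => erProb n ((d : ℝ) / n) fun G =>
        SparseR G ((4 * (d : ℝ)) ^ (-((1 + δ n) * (1 + ε n) / ε n)) * n) (ε n))
      = fun n => 1 - f n := by
    funext n
    have := erProb_add_compl n ((d : ℝ) / n)
      (fun G => SparseR G ((4 * (d : ℝ)) ^ (-((1 + δ n) * (1 + ε n) / ε n)) * n) (ε n))
    rw [hf]
    linarith
  rw [hkey]
  have htend : Filter.Tendsto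
      (fun n : ℕ => (Real.exp 1 * d / 2) * 380 * (n:ℝ) ^ (-(thC d)))
      Filter.atTop (nhds 0) := by
    have h1 : Filter.Tendsto (fun n : ℕ => ((n:ℝ)) ^ (-(thC d))) Filter.atTop (nhds 0) :=
      (tendsto_rpow_neg_atTop hθ0).comp tendsto_natCast_atTop_atTop
    have := h1.const_mul ((Real.exp 1 * d / 2) * 380)
    simpa using this
  have hf0 : Filter.Tendsto f Filter.atTop (nhds 0) := by
    apply tendsto_of_tendsto_of_tendsto_of_le_of_le' tendsto_const_nhds htend
    · filter_upwards [Filter.eventually_ge_atTop (max 1 d)] with n hn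
      have hn1 : 1 ≤ n := le_trans (le_max_left 1 d) hn
      have hn0 : (0:ℝ) < n := by exact_mod_cast hn1
      have hdn : d ≤ n := le_trans (le_max_right 1 d) hn
      apply erProb_nonneg
      · positivity
      · rw [div_le_one hn0]; exact_mod_cast hdn
    · filter_upwards [Filter.eventually_ge_atTop (max 1 d)] with n hn
      have hn1 : 1 ≤ n := le_trans (le_max_left 1 d) hn
      have hdn : d ≤ n := le_trans (le_max_right 1 d) hn
      exact bad_le d hd1 (ε n) (δ n) (hε n) (hδ n) n hn1 hdn
  have := (tendsto_const_nhds (x := (1:ℝ)) (f := Filter.atTop (α := ℕ))).sub hf0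
  simpa using this
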